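/- Let (X,d) be a metric space satisfying, for all points, the κ=0 quadruple condition: ∠̃_0(x;y,z) + ∠̃_0(x;z,w) + ∠̃_0(x;w,y) ≤ 2π for all quadruples of distinct points. Suppose w ∈ X satisfies d(y,w) + d(w,z) = d(y,z) with d(y,w) = t·d(y,z), t ∈ (0,1). Then for any x ∈ X, d(x,w)² ≥ (1−t) d(x,y)² + t d(x,z)² − t(1−t) d(y,z)². -/

import Mathlib

/-- The κ = 0 comparison angle at `x` of the triple `(x; y, z)`. -/
noncomputable def cangle {X : Type*} [MetricSpace X] (x y z : X) : ℝ :=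
  Real.arccos ((dist x y ^ 2 + dist x z ^ 2 - dist y z ^ 2) / (2 * dist x y * dist x z))

lemma cangle_symm {X : Type*} [MetricSpace X] (a b c : X) : cangle a b c = cangle a c b := by
  unfold cangle
  congr 1
  rw [dist_comm b c]
  ring

set_option maxHeartbeats 1600000

theorem stmt_11 (X : Type*) [MetricSpace X]
    (hquad : ∀ a b c e : X, a ≠ b → a ≠ c → a ≠ e → b ≠ c → b ≠ e → c ≠ e →
      cangle a b c + cangle a c e + cangle a e b ≤ 2 * Real.pi)
    (y z w : X) (t : ℝ) (ht : t ∈ Set.Ioo (0 : ℝ) 1)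
    (hmid : dist y w + dist w z = dist y z) (hyw : dist y w = t * dist y z) :
    ∀ x : X, (1 - t) * dist x y ^ 2 + t * dist x z ^ 2 - t * (1 - t) * dist y z ^ 2
      ≤ dist x w ^ 2 := by
  obtain ⟨ht0, ht1⟩ := ht
  intro x
  -- degenerate case : y = z
  by_cases hL : dist y z = 0
  · have hyz : y = z := by rwa [dist_eq_zero] at hL
    have hw : dist y w = 0 := by rw [hyw, hL]; ring
    have hwy : w = y := (dist_eq_zero.mp hw).symm
    subst hwy
    rw [← hyz, dist_self]
    nlinarith [sq_nonneg (dist x w)]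
  have hLpos : 0 < dist y z := lt_of_le_of_ne dist_nonneg (Ne.symm hL)
  have ha : dist w y = t * dist y z := by rw [dist_comm]; exact hyw
  have hb : dist w z = dist y z - t * dist y z := by
    have := hmid; rw [hyw] at this; linarith
  have hapos : 0 < dist w y := by rw [ha]; positivity
  have hbpos : 0 < dist w z := by rw [hb]; nlinarith
  -- degenerate cases for x
  by_cases hxw : x = w
  · subst hxw
    rw [dist_self, ha, hb]
    nlinarith
  by_cases hxy : x = y
  · subst hxy
    rw [dist_self, dist_comm x w, ha]
    nlinarith
  by_cases hxz : x = z
  · subst hxz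
    rw [dist_self, dist_comm x w, hb, dist_comm x y, dist_comm y x]
    nlinarith
  -- main case: all four points are distinct
  have hwx : w ≠ x := fun h => hxw h.symm
  have hwy' : w ≠ y := fun h => by rw [h, dist_self] at hapos; exact lt_irrefl 0 hapos
  have hwz' : w ≠ z := fun h => by rw [h, dist_self] at hbpos; exact lt_irrefl 0 hbpos
  have hyz' : y ≠ z := fun h => hL (by rw [h, dist_self])
  have hxpos : 0 < dist w x := dist_pos.mpr hwx
  have hsum := hquad w x y z hwx hwy' hwz' (fun h => hxy h) (fun h => hxz h) hyz'
  -- the middle angle is π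
  have hmidangle : cangle w y z = Real.pi := by
    unfold cangle
    have harg : (dist w y ^ 2 + dist w z ^ 2 - dist y z ^ 2) / (2 * dist w y * dist w z)
        = -1 := by
      have hyz2 : dist y z = dist w y + dist w z := by rw [dist_comm w y]; linarith
      rw [hyz2]
      field_simp
      ring
    rw [harg, Real.arccos_neg_one]
  -- set up the two cosines
  set p : ℝ := (dist w x ^ 2 + dist w y ^ 2 - dist x y ^ 2) / (2 * dist w x * dist w y) with hp
  set q : ℝ := (dist w x ^ 2 + dist w z ^ 2 - dist x z ^ 2) / (2 * dist w x * dist w z) with hq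
  have hcwxy : cangle w x y = Real.arccos p := rfl
  have hcwzx : cangle w z x = Real.arccos q := by rw [cangle_symm]; rfl
  rw [hcwxy, hmidangle, hcwzx] at hsum
  have harc : Real.arccos p + Real.arccos q ≤ Real.pi := by linarith
  -- triangle inequalities give bounds on p and q
  have t1 : dist x y ≤ dist x w + dist w y := dist_triangle x w y
  have t2 : dist w y ≤ dist w x + dist x y := dist_triangle w x y
  have t3 : dist w x ≤ dist w y + dist y x := dist_triangle w y x
  have t4 : dist x z ≤ dist x w + dist w z := dist_triangle x w z
  have t5 : dist w z ≤ dist w x + dist x z := dist_triangle w x z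
  have t6 : dist w x ≤ dist w z + dist z x := dist_triangle w z x
  have hxw' : dist x w = dist w x := dist_comm x w
  have hyx' : dist y x = dist x y := dist_comm y x
  have hzx' : dist z x = dist x z := dist_comm z x
  rw [hxw'] at t1 t4
  rw [hyx'] at t3
  rw [hzx'] at t6
  have hp1 : -1 ≤ p := by
    rw [hp, le_div_iff₀ (by positivity)]
    nlinarith [mul_nonneg (by linarith : (0:ℝ) ≤ dist w x + dist w y - dist x y)
      (by positivity : (0:ℝ) ≤ dist w x + dist w y + dist x y)]
  have hp2 : p ≤ 1 := by
    rw [hp, div_le_one (by positivity)]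
    nlinarith [mul_nonneg (by linarith : (0:ℝ) ≤ dist x y - (dist w x - dist w y))
      (by linarith : (0:ℝ) ≤ dist x y + (dist w x - dist w y))]
  have hq1 : -1 ≤ q := by
    rw [hq, le_div_iff₀ (by positivity)]
    nlinarith [mul_nonneg (by linarith : (0:ℝ) ≤ dist w x + dist w z - dist x z)
      (by positivity : (0:ℝ) ≤ dist w x + dist w z + dist x z)]
  have hq2 : q ≤ 1 := by
    rw [hq, div_le_one (by positivity)]
    nlinarith [mul_nonneg (by linarith : (0:ℝ) ≤ dist x z - (dist w x - dist w z))
      (by linarith : (0:ℝ) ≤ dist x z + (dist w x - dist w z))]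
  -- from arccos p + arccos q ≤ π deduce -q ≤ p
  have hcos : Real.cos (Real.pi - Real.arccos q) ≤ Real.cos (Real.arccos p) :=
    Real.cos_le_cos_of_nonneg_of_le_pi (Real.arccos_nonneg p)
      (by linarith [Real.arccos_nonneg q]) (by linarith [Real.arccos_nonneg q])
  rw [Real.cos_pi_sub, Real.cos_arccos hq1 hq2, Real.cos_arccos hp1 hp2] at hcos
  -- clear denominators
  have hnum : (dist w x ^ 2 + dist w y ^ 2 - dist x y ^ 2) * dist w z
      + (dist w x ^ 2 + dist w z ^ 2 - dist x z ^ 2) * dist w y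
      = (p + q) * (2 * dist w x * dist w y * dist w z) := by
    rw [hp, hq]
    field_simp
  have key : 0 ≤ (dist w x ^ 2 + dist w y ^ 2 - dist x y ^ 2) * dist w z
      + (dist w x ^ 2 + dist w z ^ 2 - dist x z ^ 2) * dist w y := by
    rw [hnum]
    exact mul_nonneg (by linarith) (by positivity)
  rw [ha, hb] at key
  rw [hxw']
  nlinarith [key, hLpos, mul_pos hLpos hLpos]
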